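/- arXiv:2009.13378 — 2 statements merged into one kernel-verified Lean document; each statement's English description precedes it below -/
import Mathlib

section
/- Define Pₙ(r) = I_{n+3/2}(r)/(r·I_{n+1/2}(r)) for integers n ≥ 0 and r > 0. Then 0 < Pₙ(r) ≤ 1/(2n+3) for all r > 0. -/
noncomputable def besselI (ν r : ℝ) : ℝ :=
  (r / 2) ^ ν * ∑' k : ℕ, (r / 2) ^ (2 * k) / (k.factorial * Real.Gamma (ν + k + 1))

noncomputable def Pfun (n : ℕ) (r : ℝ) : ℝ :=
  besselI ((n : ℝ) + 3 / 2) r / (r * besselI ((n : ℝ) + 1 / 2) r)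

lemma gamma_fact_le (ν : ℝ) (hν : 0 < ν) (k : ℕ) :
    Real.Gamma (ν + 1) * k.factorial ≤ Real.Gamma (ν + k + 1) := by
  induction k with
  | zero => simp
  | succ k ih =>
    have hpos : (0:ℝ) < ν + k + 1 := by positivity
    have h1 : Real.Gamma (ν + (k+1:ℕ) + 1) = (ν + k + 1) * Real.Gamma (ν + k + 1) := by
      have := Real.Gamma_add_one hpos.ne'
      push_cast
      rw [show ν + (k+1:ℝ) + 1 = (ν + k + 1) + 1 by ring, this]
    rw [h1]
    have hg : (0:ℝ) < Real.Gamma (ν + k + 1) := Real.Gamma_pos_of_pos hpos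
    calc Real.Gamma (ν + 1) * ((k+1).factorial : ℝ)
        = (k+1) * (Real.Gamma (ν + 1) * k.factorial) := by
          push_cast [Nat.factorial_succ]; ring
      _ ≤ (k+1) * Real.Gamma (ν + k + 1) := by
          apply mul_le_mul_of_nonneg_left ih (by positivity)
      _ ≤ (ν + k + 1) * Real.Gamma (ν + k + 1) := by
          apply mul_le_mul_of_nonneg_right (by linarith) hg.le

lemma summable_aux (ν r : ℝ) (hν : 0 < ν) :
    Summable (fun k : ℕ => (r/2)^(2*k) / (k.factorial * Real.Gamma (ν + k + 1))) := by
  have hg1 : (0:ℝ) < Real.Gamma (ν + 1) := Real.Gamma_pos_of_pos (by positivity)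
  refine Summable.of_nonneg_of_le (fun k => ?_) (fun k => ?_)
    ((Real.summable_pow_div_factorial ((r/2)^2)).mul_right (1 / Real.Gamma (ν+1)))
  · 
    have hgk : (0:ℝ) < Real.Gamma (ν + k + 1) := Real.Gamma_pos_of_pos (by positivity)
    have : (0:ℝ) ≤ (r/2)^(2*k) := by rw [pow_mul]; positivity
    positivity
  · have hgk : (0:ℝ) < Real.Gamma (ν + k + 1) := Real.Gamma_pos_of_pos (by positivity)
    rw [pow_mul]
    have hkf : (1:ℝ) ≤ k.factorial :=
      (Nat.one_le_cast (α := ℝ)).mpr (Nat.one_le_iff_ne_zero.mpr (Nat.factorial_ne_zero k))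
    have hmono : Real.Gamma (ν + 1) ≤ Real.Gamma (ν + k + 1) := by
      calc Real.Gamma (ν + 1) = Real.Gamma (ν + 1) * 1 := by ring
        _ ≤ Real.Gamma (ν + 1) * k.factorial := by nlinarith
        _ ≤ Real.Gamma (ν + k + 1) := gamma_fact_le ν hν k
    calc ((r/2)^2)^k / ((k.factorial : ℝ) * Real.Gamma (ν + k + 1))
        ≤ ((r/2)^2)^k / ((k.factorial : ℝ) * Real.Gamma (ν + 1)) := by
          gcongr
      _ = ((r/2)^2)^k / k.factorial * (1 / Real.Gamma (ν+1)) := by ring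

lemma besselI_pos (ν r : ℝ) (hν : 0 < ν) (hr : 0 < r) : 0 < besselI ν r := by
  unfold besselI
  apply mul_pos (Real.rpow_pos_of_pos (by positivity) _)
  refine Summable.tsum_pos (summable_aux ν r hν) (fun k => ?_) 0 ?_
  · have hgk : (0:ℝ) < Real.Gamma (ν + k + 1) := Real.Gamma_pos_of_pos (by positivity)
    have : (0:ℝ) ≤ (r/2)^(2*k) := by rw [pow_mul]; positivity
    positivity
  · have hgk : (0:ℝ) < Real.Gamma (ν + 0 + 1) := Real.Gamma_pos_of_pos (by positivity)
    have : (0:ℝ) < (r/2)^(2*0) := by norm_num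
    positivity

lemma besselI_succ_le (ν r : ℝ) (hν : 0 < ν) (hr : 0 < r) :
    besselI (ν + 1) r ≤ r / (2*(ν+1)) * besselI ν r := by
  unfold besselI
  have hS : (∑' k : ℕ, (r/2)^(2*k) / (k.factorial * Real.Gamma (ν + 1 + k + 1)))
      ≤ (∑' k : ℕ, (r/2)^(2*k) / (k.factorial * Real.Gamma (ν + k + 1))) / (ν+1) := by
    rw [← tsum_div_const]
    apply Summable.tsum_le_tsum _ (summable_aux (ν+1) r (by positivity))
      ((summable_aux ν r hν).div_const _)
    intro k
    have hpos : (0:ℝ) < ν + k + 1 := by positivity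
    have hgk : (0:ℝ) < Real.Gamma (ν + k + 1) := Real.Gamma_pos_of_pos hpos
    have h1 : Real.Gamma (ν + 1 + k + 1) = (ν + k + 1) * Real.Gamma (ν + k + 1) := by
      have := Real.Gamma_add_one hpos.ne'
      rw [show ν + 1 + k + 1 = (ν + k + 1) + 1 by ring, this]
    rw [h1, div_div]
    rw [div_le_div_iff₀ (by positivity) (by positivity)]
    have hnum : (0:ℝ) ≤ (r/2)^(2*k) := by rw [pow_mul]; positivity
    have hle : (ν + 1) * Real.Gamma (ν + k + 1) ≤ (ν + k + 1) * Real.Gamma (ν + k + 1) := by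
      have hk0 : (0:ℝ) ≤ (k:ℝ) := Nat.cast_nonneg k
      nlinarith
    have : (k.factorial : ℝ) * Real.Gamma (ν + k + 1) * (ν + 1)
        ≤ k.factorial * ((ν + k + 1) * Real.Gamma (ν + k + 1)) := by
      have h := mul_le_mul_of_nonneg_left hle (Nat.cast_nonneg (α := ℝ) k.factorial)
      nlinarith [h]
    nlinarith
  have hpow : (r/2) ^ (ν+1) = (r/2)^ν * (r/2) := by
    rw [Real.rpow_add (by positivity), Real.rpow_one]
  rw [hpow]
  have hν' : (0:ℝ) < ν + 1 := by positivity
  calc (r/2)^ν * (r/2) * (∑' k : ℕ, (r/2)^(2*k) / (k.factorial * Real.Gamma (ν + 1 + k + 1)))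
      ≤ (r/2)^ν * (r/2) * ((∑' k : ℕ, (r/2)^(2*k) / (k.factorial * Real.Gamma (ν + k + 1))) / (ν+1)) := by
        apply mul_le_mul_of_nonneg_left hS
        have := Real.rpow_pos_of_pos (show (0:ℝ) < r/2 by positivity) ν
        positivity
    _ = r / (2*(ν+1)) * ((r/2)^ν * (∑' k : ℕ, (r/2)^(2*k) / (k.factorial * Real.Gamma (ν + k + 1)))) := by
        field_simp

theorem Pfun_pos_le (n : ℕ) (r : ℝ) (hr : 0 < r) :
    0 < Pfun n r ∧ Pfun n r ≤ 1 / (2 * (n : ℝ) + 3) := by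
  set ν : ℝ := (n : ℝ) + 1/2 with hνdef
  have hν : 0 < ν := by positivity
  have hsucc : (n : ℝ) + 3/2 = ν + 1 := by rw [hνdef]; ring
  have hb1 : 0 < besselI ν r := besselI_pos ν r hν hr
  have hb2 : 0 < besselI (ν+1) r := besselI_pos (ν+1) r (by positivity) hr
  have hkey := besselI_succ_le ν r hν hr
  constructor
  · unfold Pfun
    rw [hsucc]
    exact div_pos hb2 (mul_pos hr hb1)
  · unfold Pfun
    rw [hsucc]
    have h2 : (2:ℝ) * (n:ℝ) + 3 = 2*(ν+1) := by rw [hνdef]; ring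
    rw [h2]
    rw [div_le_div_iff₀ (mul_pos hr hb1) (by positivity)]
    calc besselI (ν+1) r * (2*(ν+1))
        ≤ (r / (2*(ν+1)) * besselI ν r) * (2*(ν+1)) := by
          apply mul_le_mul_of_nonneg_right hkey (by positivity)
      _ = 1 * (r * besselI ν r) := by field_simp
end

section
/- Define Pₙ(r) = I_{n+3/2}(r)/(r·I_{n+1/2}(r)). Then for every integer n ≥ 0 and every r > 0, Pₙ(r) > P_{n+1}(r). -/
open Finset Finset.Nat

/-- descending factorial `x (x-1) ⋯ (x-n+1)` over the reals -/
private noncomputable def dfact (x : ℝ) : ℕ → ℝ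
  | 0 => 1
  | n + 1 => dfact x n * (x - n)

private lemma dfact_zero (x : ℝ) : dfact x 0 = 1 := rfl
private lemma dfact_succ (x : ℝ) (n : ℕ) : dfact x (n + 1) = dfact x n * (x - n) := rfl

private lemma dfact_succ' (x : ℝ) (n : ℕ) : dfact x (n + 1) = x * dfact (x - 1) n := by
  induction n with
  | zero => simp [dfact_succ, dfact_zero]
  | succ n ih =>
    rw [dfact_succ, ih, dfact_succ]
    push_cast
    ring

/-- Vandermonde convolution for descending factorials. -/
private lemma dfact_vander (A B : ℝ) : ∀ m : ℕ,
    ∑ p ∈ antidiagonal m, (m.choose p.1 : ℝ) * dfact A p.1 * dfact B p.2 = dfact (A + B) m := by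
  intro m
  induction m with
  | zero => simp [dfact_zero]
  | succ m ih =>
    rw [sum_antidiagonal_succ]
    have pascal : ∀ p : ℕ × ℕ, ((m + 1).choose (p.1 + 1) : ℝ)
        = (m.choose p.1 : ℝ) + (m.choose (p.1 + 1) : ℝ) := by
      intro p; rw [Nat.choose_succ_succ]; push_cast; ring
    have split : ∑ p ∈ antidiagonal m,
          ((m + 1).choose (p.1 + 1) : ℝ) * dfact A (p.1 + 1) * dfact B p.2
        = (∑ p ∈ antidiagonal m, (m.choose p.1 : ℝ) * dfact A (p.1 + 1) * dfact B p.2)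
          + ∑ p ∈ antidiagonal m, (m.choose (p.1 + 1) : ℝ) * dfact A (p.1 + 1) * dfact B p.2 := by
      rw [← Finset.sum_add_distrib]
      refine Finset.sum_congr rfl fun p _ => ?_
      rw [pascal]; ring
    rw [split]
    -- second piece plus the boundary term assembles to a shifted full sum
    have h2 : (((m + 1).choose 0 : ℝ) * dfact A 0 * dfact B (m + 1))
          + ∑ p ∈ antidiagonal m, (m.choose (p.1 + 1) : ℝ) * dfact A (p.1 + 1) * dfact B p.2
        = ∑ p ∈ antidiagonal (m + 1), (m.choose p.1 : ℝ) * dfact A p.1 * dfact B p.2 := by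
      rw [sum_antidiagonal_succ (f := fun p => (m.choose p.1 : ℝ) * dfact A p.1 * dfact B p.2)]
      simp [dfact_zero]
    have h3 : ∑ p ∈ antidiagonal (m + 1), (m.choose p.1 : ℝ) * dfact A p.1 * dfact B p.2
        = ∑ p ∈ antidiagonal m, (m.choose p.1 : ℝ) * dfact A p.1 * (dfact B p.2 * (B - p.2)) := by
      rw [sum_antidiagonal_succ' (f := fun p => (m.choose p.1 : ℝ) * dfact A p.1 * dfact B p.2)]
      simp [Nat.choose_succ_self, dfact_succ]
    have key : ∀ p ∈ antidiagonal m,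
        (m.choose p.1 : ℝ) * dfact A (p.1 + 1) * dfact B p.2
          + (m.choose p.1 : ℝ) * dfact A p.1 * (dfact B p.2 * (B - p.2))
        = ((m.choose p.1 : ℝ) * dfact A p.1 * dfact B p.2) * (A + B - m) := by
      intro p hp
      have hm : (p.1 : ℝ) + p.2 = m := by
        have h := Finset.HasAntidiagonal.mem_antidiagonal.mp hp
        exact_mod_cast congrArg (Nat.cast : ℕ → ℝ) h
      rw [dfact_succ]
      linear_combination (-(m.choose p.1 : ℝ) * dfact A p.1 * dfact B p.2) * hm
    calc ((m + 1).choose 0 : ℝ) * dfact A 0 * dfact B (m + 1)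
          + ((∑ p ∈ antidiagonal m, (m.choose p.1 : ℝ) * dfact A (p.1 + 1) * dfact B p.2)
          + ∑ p ∈ antidiagonal m, (m.choose (p.1 + 1) : ℝ) * dfact A (p.1 + 1) * dfact B p.2)
        = (∑ p ∈ antidiagonal m, (m.choose p.1 : ℝ) * dfact A (p.1 + 1) * dfact B p.2)
          + (((m + 1).choose 0 : ℝ) * dfact A 0 * dfact B (m + 1)
            + ∑ p ∈ antidiagonal m, (m.choose (p.1 + 1) : ℝ) * dfact A (p.1 + 1) * dfact B p.2) := by
          ring
      _ = ∑ p ∈ antidiagonal m, ((m.choose p.1 : ℝ) * dfact A (p.1 + 1) * dfact B p.2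
            + (m.choose p.1 : ℝ) * dfact A p.1 * (dfact B p.2 * (B - p.2))) := by
          rw [h2, h3, ← Finset.sum_add_distrib]
      _ = ∑ p ∈ antidiagonal m, ((m.choose p.1 : ℝ) * dfact A p.1 * dfact B p.2) * (A + B - m) := by
          exact Finset.sum_congr rfl key
      _ = dfact (A + B) (m + 1) := by
          rw [← Finset.sum_mul, ih, dfact_succ]

private lemma Gamma_nat_pos {a : ℝ} (ha : 0 < a) (n : ℕ) : 0 < Real.Gamma (a + n) :=
  Real.Gamma_pos_of_pos (by positivity)

/-- `Γ(x + n) = (x+n-1)(x+n-2)⋯x · Γ(x)` -/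
private lemma Gamma_dfact {x : ℝ} (hx : 0 < x) (n : ℕ) :
    Real.Gamma (x + n) = dfact (x + n - 1) n * Real.Gamma x := by
  induction n with
  | zero => simp [dfact_zero]
  | succ n ih =>
    have hxn : x + (n : ℝ) ≠ 0 := by positivity
    have h1 : x + ((n : ℕ) + 1 : ℕ) = (x + n) + 1 := by push_cast; ring
    rw [h1, Real.Gamma_add_one hxn, ih]
    have h2 : x + (n : ℝ) + 1 - 1 = x + n := by ring
    rw [h2, dfact_succ']
    ring

/-- key closed form for the Cauchy-product coefficients -/
private lemma key_identity {a b : ℝ} (ha : 0 < a) (hb : 0 < b) (m : ℕ) :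
    ∑ p ∈ antidiagonal m,
        (1 : ℝ) / (p.1.factorial * p.2.factorial * Real.Gamma (a + p.1) * Real.Gamma (b + p.2))
      = dfact (a + b + 2 * m - 2) m
        / (m.factorial * Real.Gamma (a + m) * Real.Gamma (b + m)) := by
  have hterm : ∀ p ∈ antidiagonal m,
      (1 : ℝ) / (p.1.factorial * p.2.factorial * Real.Gamma (a + p.1) * Real.Gamma (b + p.2))
        = (m.choose p.1 : ℝ) * dfact (b + m - 1) p.1 * dfact (a + m - 1) p.2
          / (m.factorial * Real.Gamma (a + m) * Real.Gamma (b + m)) := by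
    intro p hp
    have hpm : p.1 + p.2 = m := Finset.HasAntidiagonal.mem_antidiagonal.mp hp
    have hga : Real.Gamma (a + m) = dfact (a + m - 1) p.2 * Real.Gamma (a + p.1) := by
      have := Gamma_dfact (x := a + p.1) (by positivity) p.2
      have e1 : a + (p.1 : ℝ) + p.2 = a + m := by
        rw [← hpm]; push_cast; ring
      rw [e1] at this
      exact this
    have hgb : Real.Gamma (b + m) = dfact (b + m - 1) p.1 * Real.Gamma (b + p.2) := by
      have := Gamma_dfact (x := b + p.2) (by positivity) p.1
      have e1 : b + (p.2 : ℝ) + p.1 = b + m := by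
        rw [← hpm]; push_cast; ring
      rw [e1] at this
      exact this
    have hfact : (m.factorial : ℝ) = (m.choose p.1 : ℝ) * p.1.factorial * p.2.factorial := by
      have h1 : p.1 ≤ m := by omega
      have := Nat.choose_mul_factorial_mul_factorial h1
      have h2 : m - p.1 = p.2 := by omega
      rw [h2] at this
      exact_mod_cast (congrArg (Nat.cast : ℕ → ℝ) this).symm
    have hd2 : dfact (a + (m : ℝ) - 1) p.2 ≠ 0 := by
      intro h0
      rw [h0, zero_mul] at hga
      exact ne_of_gt (Gamma_nat_pos ha m) hga
    have hd1 : dfact (b + (m : ℝ) - 1) p.1 ≠ 0 := by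
      intro h0
      rw [h0, zero_mul] at hgb
      exact ne_of_gt (Gamma_nat_pos hb m) hgb
    have hC : (m.choose p.1 : ℝ) ≠ 0 := by
      have : 0 < m.choose p.1 := Nat.choose_pos (by omega)
      positivity
    have hgA : Real.Gamma (a + p.1) ≠ 0 := ne_of_gt (Gamma_nat_pos ha p.1)
    have hgb' : Real.Gamma (b + p.2) ≠ 0 := ne_of_gt (Gamma_nat_pos hb p.2)
    have hf1 : (p.1.factorial : ℝ) ≠ 0 := by positivity
    have hf2 : (p.2.factorial : ℝ) ≠ 0 := by positivity
    rw [hga, hgb, hfact]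
    field_simp
  rw [Finset.sum_congr rfl hterm, ← Finset.sum_div]
  congr 1
  have := dfact_vander (b + m - 1) (a + m - 1) m
  rw [this]
  congr 1
  push_cast
  ring

private noncomputable def useq (a t : ℝ) (k : ℕ) : ℝ :=
  t ^ k / (k.factorial * Real.Gamma (a + k))

private lemma useq_pos {a t : ℝ} (ha : 0 < a) (ht : 0 < t) (k : ℕ) : 0 < useq a t k := by
  have := Gamma_nat_pos ha k
  have := Nat.factorial_pos k
  unfold useq
  positivity

private lemma useq_succ {a t : ℝ} (ha : 0 < a) (k : ℕ) :
    useq a t (k + 1) = (t / ((k + 1) * (a + k))) * useq a t k := by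
  have hxn : a + (k : ℝ) ≠ 0 := by positivity
  have h1 : a + ((k : ℕ) + 1 : ℕ) = (a + k) + 1 := by push_cast; ring
  unfold useq
  rw [h1, Real.Gamma_add_one hxn, Nat.factorial_succ]
  have hg : Real.Gamma (a + k) ≠ 0 := ne_of_gt (Gamma_nat_pos ha k)
  have hf : (k.factorial : ℝ) ≠ 0 := by positivity
  have hk1 : ((k : ℝ) + 1) ≠ 0 := by positivity
  push_cast
  rw [pow_succ]
  field_simp

private lemma summable_useq {a t : ℝ} (ha : 0 < a) (ht : 0 < t) : Summable (useq a t) := by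
  apply summable_of_ratio_norm_eventually_le (r := 1/2) (by norm_num)
  rw [Filter.eventually_atTop]
  refine ⟨max 1 ⌈2 * t⌉₊, fun n hn => ?_⟩
  have hn1 : 1 ≤ n := le_trans (le_max_left _ _) hn
  have hn2 : 2 * t ≤ n := le_trans (Nat.le_ceil _) (by exact_mod_cast le_trans (le_max_right _ _) hn)
  have hu : 0 < useq a t n := useq_pos ha ht n
  have hfrac : (0:ℝ) ≤ t / (((n:ℝ) + 1) * (a + n)) := by positivity
  rw [useq_succ ha n, Real.norm_of_nonneg (mul_nonneg hfrac hu.le), Real.norm_of_nonneg hu.le]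
  apply mul_le_mul_of_nonneg_right _ hu.le
  rw [div_le_iff₀ (by positivity)]
  have hn1' : (1:ℝ) ≤ n := by exact_mod_cast hn1
  nlinarith [ha, hn2, hn1']


private lemma summable_norm_useq {a t : ℝ} (ha : 0 < a) (ht : 0 < t) :
    Summable fun k => ‖useq a t k‖ := by
  have : (fun k => ‖useq a t k‖) = useq a t :=
    funext fun k => Real.norm_of_nonneg (useq_pos ha ht k).le
  rw [this]
  exact summable_useq ha ht

private lemma coeff_eq {x y t : ℝ} (hx : 0 < x) (hy : 0 < y) (ht : 0 < t) (m : ℕ) :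
    ∑ p ∈ antidiagonal m, useq x t p.1 * useq y t p.2
      = t ^ m * (dfact (x + y + 2 * m - 2) m
          / (m.factorial * Real.Gamma (x + m) * Real.Gamma (y + m))) := by
  have hterm : ∀ p ∈ antidiagonal m, useq x t p.1 * useq y t p.2
      = t ^ m * ((1:ℝ) / (p.1.factorial * p.2.factorial
          * Real.Gamma (x + p.1) * Real.Gamma (y + p.2))) := by
    intro p hp
    have hpm : p.1 + p.2 = m := Finset.HasAntidiagonal.mem_antidiagonal.mp hp
    unfold useq
    rw [← hpm, pow_add]
    have h1 : Real.Gamma (x + p.1) ≠ 0 := ne_of_gt (Gamma_nat_pos hx p.1)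
    have h2 : Real.Gamma (y + p.2) ≠ 0 := ne_of_gt (Gamma_nat_pos hy p.2)
    have h3 : (p.1.factorial : ℝ) ≠ 0 := by positivity
    have h4 : (p.2.factorial : ℝ) ≠ 0 := by positivity
    field_simp
  rw [Finset.sum_congr rfl hterm, ← Finset.mul_sum, key_identity hx hy]

private lemma dfact_arg_pos {a : ℝ} (ha : 0 < a) (m : ℕ) :
    0 < dfact (2 * a + 2 * m) m := by
  have hx : (0:ℝ) < 2 * a + m + 1 := by positivity
  have h := Gamma_dfact (x := 2 * a + m + 1) hx m
  have e : 2 * a + (m:ℝ) + 1 + m - 1 = 2 * a + 2 * m := by push_cast; ring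
  rw [e] at h
  have h1 : 0 < Real.Gamma (2 * a + (m:ℝ) + 1 + m) := Real.Gamma_pos_of_pos (by positivity)
  have h2 : 0 < Real.Gamma (2 * a + (m:ℝ) + 1) := Real.Gamma_pos_of_pos hx
  nlinarith [h, h1, h2]

private lemma turan {a t : ℝ} (ha : 0 < a) (ht : 0 < t) :
    (∑' k, useq a t k) * (∑' k, useq (a + 2) t k)
      < (∑' k, useq (a + 1) t k) * (∑' k, useq (a + 1) t k) := by
  have ha1 : (0:ℝ) < a + 1 := by positivity
  have ha2 : (0:ℝ) < a + 2 := by positivity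
  rw [tsum_mul_tsum_eq_tsum_sum_antidiagonal_of_summable_norm
        (summable_norm_useq ha ht) (summable_norm_useq ha2 ht),
      tsum_mul_tsum_eq_tsum_sum_antidiagonal_of_summable_norm
        (summable_norm_useq ha1 ht) (summable_norm_useq ha1 ht)]
  have hcoeff : ∀ m : ℕ,
      ∑ p ∈ antidiagonal m, useq a t p.1 * useq (a+2) t p.2
        < ∑ p ∈ antidiagonal m, useq (a+1) t p.1 * useq (a+1) t p.2 := by
    intro m
    rw [coeff_eq ha ha2 ht, coeff_eq ha1 ha1 ht]
    have e1 : a + (a + 2) + 2 * (m:ℝ) - 2 = 2 * a + 2 * m := by ring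
    have e2 : a + 1 + (a + 1) + 2 * (m:ℝ) - 2 = 2 * a + 2 * m := by ring
    rw [e1, e2]
    have hD : 0 < dfact (2 * a + 2 * (m:ℝ)) m := dfact_arg_pos ha m
    have hg : 0 < Real.Gamma (a + m) := Gamma_nat_pos ha m
    have hxm : (0:ℝ) < a + m := by positivity
    have hG1 : Real.Gamma (a + 1 + m) = (a + m) * Real.Gamma (a + m) := by
      have e : a + 1 + (m:ℝ) = (a + m) + 1 := by ring
      rw [e, Real.Gamma_add_one (ne_of_gt hxm)]
    have hG2 : Real.Gamma (a + 2 + m) = (a + m + 1) * ((a + m) * Real.Gamma (a + m)) := by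
      have e : a + 2 + (m:ℝ) = ((a + m) + 1) + 1 := by ring
      rw [e, Real.Gamma_add_one (by positivity), Real.Gamma_add_one (ne_of_gt hxm)]
    apply mul_lt_mul_of_pos_left _ (by positivity : (0:ℝ) < t ^ m)
    apply div_lt_div_of_pos_left hD
    · positivity
    · rw [hG1, hG2]
      have hM : (0:ℝ) < m.factorial := by positivity
      nlinarith [mul_pos (mul_pos hM hxm) (mul_pos hg hg)]
  apply Summable.tsum_lt_tsum_of_nonneg (i := 0)
  · intro b
    exact Finset.sum_nonneg fun p _ =>
      mul_nonneg (useq_pos ha ht p.1).le (useq_pos ha2 ht p.2).le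
  · exact fun b => (hcoeff b).le
  · exact hcoeff 0
  · exact summable_sum_mul_antidiagonal_of_summable_mul
      (summable_mul_of_summable_norm (summable_norm_useq ha1 ht) (summable_norm_useq ha1 ht))

private lemma besselI_eq (ν r : ℝ) :
    besselI ν r = (r / 2) ^ ν * ∑' k : ℕ, useq (ν + 1) ((r / 2) ^ 2) k := by
  unfold besselI
  congr 1
  apply tsum_congr
  intro k
  unfold useq
  rw [← pow_mul]
  have h : ν + 1 + (k : ℝ) = ν + k + 1 := by ring
  rw [h]

private lemma tsum_useq_pos {a t : ℝ} (ha : 0 < a) (ht : 0 < t) :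
    0 < ∑' k, useq a t k :=
  Summable.tsum_pos (summable_useq ha ht) (fun k => (useq_pos ha ht k).le) 0 (useq_pos ha ht 0)

private lemma Pfun_eq (m : ℕ) (r : ℝ) (hr : 0 < r) :
    Pfun m r = (∑' k, useq ((m : ℝ) + 5/2) ((r/2)^2) k)
      / (2 * ∑' k, useq ((m : ℝ) + 3/2) ((r/2)^2) k) := by
  have hs : (0:ℝ) < r / 2 := by linarith
  have ht : (0:ℝ) < (r/2)^2 := by positivity
  unfold Pfun
  rw [besselI_eq, besselI_eq]
  have e1 : (m : ℝ) + 3/2 + 1 = (m : ℝ) + 5/2 := by ring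
  have e2 : (m : ℝ) + 1/2 + 1 = (m : ℝ) + 3/2 := by ring
  rw [e1, e2]
  have e3 : (r/2 : ℝ) ^ ((m : ℝ) + 3/2) = (r/2) ^ ((m : ℝ) + 1/2) * (r/2) := by
    have : (m : ℝ) + 3/2 = ((m : ℝ) + 1/2) + 1 := by ring
    rw [this, Real.rpow_add hs, Real.rpow_one]
  rw [e3]
  have h1 : (r/2 : ℝ) ^ ((m : ℝ) + 1/2) ≠ 0 := ne_of_gt (Real.rpow_pos_of_pos hs _)
  have h2 : (0:ℝ) < ∑' k, useq ((m : ℝ) + 3/2) ((r/2)^2) k :=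
    tsum_useq_pos (by positivity) ht
  rw [div_eq_div_iff (by positivity) (by positivity)]
  ring

theorem Pfun_strict_anti_in_n (n : ℕ) (r : ℝ) (hr : 0 < r) :
    Pfun n r > Pfun (n + 1) r := by
  have ht : (0:ℝ) < (r/2)^2 := by positivity
  rw [Pfun_eq n r hr, Pfun_eq (n+1) r hr]
  set t := (r/2)^2
  set a : ℝ := (n : ℝ) + 3/2 with ha_def
  have ha : 0 < a := by positivity
  have e1 : ((n+1 : ℕ) : ℝ) + 5/2 = a + 2 := by push_cast [ha_def]; ring
  have e2 : ((n+1 : ℕ) : ℝ) + 3/2 = a + 1 := by push_cast [ha_def]; ring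
  have e3 : (n : ℝ) + 5/2 = a + 1 := by rw [ha_def]; ring
  rw [e1, e2, e3]
  have hA : 0 < ∑' k, useq a t k := tsum_useq_pos ha ht
  have hA1 : 0 < ∑' k, useq (a+1) t k := tsum_useq_pos (by positivity) ht
  have hA2 : 0 < ∑' k, useq (a+2) t k := tsum_useq_pos (by positivity) ht
  have h := turan ha ht
  rw [gt_iff_lt, div_lt_div_iff₀ (by positivity) (by positivity)]
  nlinarith [h]
end
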